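/- Let x : [0,1] → ℝ be continuous, let π = (t_i)_{i=0}^m be a finite partition of [0,1], and let k ≥ 1 be an integer. Then there exists a finite partition π' ⊇ π of [0,1] such that Σ over consecutive points s of π' of (x(s') − x(s))² equals (1/k) · Σ over consecutive points of π of the squared increments, i.e. ⟨x⟩^{π'}_1 = ⟨x⟩^π_1 / k. -/

import Mathlib

open Filter Set

/-- A finite partition of `[0,1]`. -/
def IsPartition01 (π : ℕ → ℝ) : Prop :=
  π 0 = 0 ∧ Monotone π ∧ ∃ N, ∀ k ≥ N, π k = 1

/-- The quadratic variation of `x` along a finite partition `π`. -/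
noncomputable def qvFull (x : ℝ → ℝ) (π : ℕ → ℝ) : ℝ :=
  ∑' i : ℕ, (x (π (i + 1)) - x (π i)) ^ 2

private theorem sum_div_blocks (g : ℕ → ℝ) (k : ℕ) (hk : 0 < k) (N : ℕ) :
    ∑ n ∈ Finset.range (N * k), g (n / k) = k * ∑ q ∈ Finset.range N, g q := by
  induction N with
  | zero => simp
  | succ N ih =>
    rw [← Finset.sum_range_add_sum_Ico _ (by nlinarith : N * k ≤ (N+1) * k), ih,
      Finset.sum_Ico_eq_sum_range]
    have h1 : (N+1) * k - N * k = k := by ring_nf; omega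
    rw [h1]
    have : ∀ i ∈ Finset.range k, g ((N * k + i) / k) = g N := by
      intro i hi
      rw [mul_comm N k, Nat.mul_add_div hk, Nat.div_eq_of_lt (Finset.mem_range.mp hi), add_zero]
    rw [Finset.sum_congr rfl this, Finset.sum_range_succ]
    simp; ring

theorem exists_refinement_qv_div
    (x : ℝ → ℝ) (π : ℕ → ℝ) (k : ℕ)
    (hx : ContinuousOn x (Set.Icc 0 1))
    (hπ : IsPartition01 π) (hk : 1 ≤ k) :
    ∃ π' : ℕ → ℝ, IsPartition01 π' ∧ Set.range π ⊆ Set.range π' ∧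
      qvFull x π' = qvFull x π / k := by
  obtain ⟨h0, hmono, N, hN⟩ := hπ
  have hk0 : 0 < k := hk
  have hkR : (0:ℝ) < k := by exact_mod_cast hk0
  have hlb : ∀ q, 0 ≤ π q := fun q => h0 ▸ hmono (Nat.zero_le q)
  have hub : ∀ q, π q ≤ 1 := fun q => by
    calc π q ≤ π (max q N) := hmono (le_max_left _ _)
    _ = 1 := hN _ (le_max_right _ _)
  set L : ℕ → ℕ → ℝ := fun q r => x (π q) + (x (π (q+1)) - x (π q)) * r / k with hL
  set S : ℕ → ℕ → Set ℝ := fun q r => Icc (π q) (π (q+1)) ∩ x ⁻¹' {L q r} with hS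
  have hLform : ∀ q r, L q r = x (π q) + (x (π (q+1)) - x (π q)) * ((r:ℝ)/(k:ℝ)) := by
    intro q r; rw [hL]; ring
  have hIcc01 : ∀ q, Icc (π q) (π (q+1)) ⊆ Icc (0:ℝ) 1 :=
    fun q => Icc_subset_Icc (hlb q) (hub (q+1))
  have hcont : ∀ q, ContinuousOn x (Icc (π q) (π (q+1))) := fun q => hx.mono (hIcc01 q)
  have huIcc : ∀ q, uIcc (π q) (π (q+1)) = Icc (π q) (π (q+1)) :=
    fun q => uIcc_of_le (hmono (Nat.le_succ q))
  have hSne : ∀ q r, r ≤ k → (S q r).Nonempty := by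
    intro q r hr
    have hmem : L q r ∈ uIcc (x (π q)) (x (π (q+1))) := by
      have h1 : (0:ℝ) ≤ (r:ℝ) / k := by positivity
      have h2 : (r:ℝ) / k ≤ 1 := by
        rw [div_le_one hkR]; exact_mod_cast hr
      rw [hLform]
      rcases le_total (x (π q)) (x (π (q+1))) with h | h
      · rw [Set.mem_uIcc]; left
        constructor
        · linarith [mul_nonneg (sub_nonneg.2 h) h1]
        · linarith [mul_le_mul_of_nonneg_left h2 (sub_nonneg.2 h)]
      · rw [Set.mem_uIcc]; right
        constructor
        · linarith [mul_le_mul_of_nonneg_left h2 (sub_nonneg.2 h)]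
        · linarith [mul_nonneg (sub_nonneg.2 h) h1]
    have := intermediate_value_uIcc (huIcc q ▸ hcont q) hmem
    obtain ⟨t, ht, hxt⟩ := this
    exact ⟨t, (huIcc q ▸ ht : t ∈ Icc _ _), by simpa using hxt⟩
  have hSbdd : ∀ q r, BddBelow (S q r) :=
    fun q r => (bddBelow_Icc).mono Set.inter_subset_left
  have hScl : ∀ q r, IsClosed (S q r) :=
    fun q r => (hcont q).preimage_isClosed_of_isClosed isClosed_Icc isClosed_singleton
  have hmemS : ∀ q r, r ≤ k → sInf (S q r) ∈ S q r :=
    fun q r hr => (hScl q r).csInf_mem (hSne q r hr) (hSbdd q r)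
  set π' : ℕ → ℝ := fun n => if n % k = 0 then π (n / k) else sInf (S (n / k) (n % k)) with hπ'
  have hval : ∀ n, x (π' n) = L (n / k) (n % k) := by
    intro n
    by_cases h : n % k = 0
    · simp [hπ', h, hL]
    · have := (hmemS (n / k) (n % k) (Nat.mod_lt n hk0).le).2
      simp only [hπ', if_neg h]
      simpa using this
  have hIccmem : ∀ n, π' n ∈ Icc (π (n / k)) (π (n / k + 1)) := by
    intro n
    by_cases h : n % k = 0
    · simp only [hπ', if_pos h]
      exact ⟨le_refl _, hmono (Nat.le_succ _)⟩
    · simp only [hπ', if_neg h]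
      exact (hmemS (n / k) (n % k) (Nat.mod_lt n hk0).le).1
  -- within-block monotonicity of the sInf's
  have hmono2 : ∀ q r, r + 1 ≤ k → sInf (S q r) ≤ sInf (S q (r+1)) := by
    intro q r hr
    refine le_csInf (hSne q (r+1) hr) fun t ht => ?_
    obtain ⟨⟨htl, htr⟩, hxt⟩ := ht
    have hxt' : x t = L q (r+1) := hxt
    have hc : ContinuousOn x (uIcc (π q) t) := by
      refine hx.mono ?_
      rw [uIcc_of_le htl]
      exact Icc_subset_Icc (hlb q) (htr.trans (hub (q+1)))
    have hmem : L q r ∈ uIcc (x (π q)) (x t) := by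
      rw [hxt']
      have h1 : (0:ℝ) ≤ (r:ℝ) / k := by positivity
      have h2 : ((r:ℝ)+1) / k ≤ 1 := by
        rw [div_le_one hkR]; push_cast; exact_mod_cast hr
      have h3 : (r:ℝ) / k ≤ ((r:ℝ)+1)/k := (div_le_div_iff_of_pos_right hkR).mpr (by linarith)
      rw [hLform, hLform]
      push_cast
      rcases le_total (x (π q)) (x (π (q+1))) with h | h
      · rw [Set.mem_uIcc]; left
        constructor
        · linarith [mul_nonneg (sub_nonneg.2 h) h1]
        · linarith [mul_le_mul_of_nonneg_left h3 (sub_nonneg.2 h)]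
      · rw [Set.mem_uIcc]; right
        constructor
        · linarith [mul_le_mul_of_nonneg_left h3 (sub_nonneg.2 h)]
        · linarith [mul_nonneg (sub_nonneg.2 h) h1]
    obtain ⟨t', ht', hxt''⟩ := intermediate_value_uIcc hc hmem
    rw [uIcc_of_le htl] at ht'
    have ht'S : t' ∈ S q r := ⟨⟨ht'.1, ht'.2.trans htr⟩, hxt''⟩
    exact (csInf_le (hSbdd q r) ht'S).trans ht'.2
  have hdm : ∀ n, n = k * (n / k) + n % k := fun n => (Nat.div_add_mod n k).symm
  have hmono' : Monotone π' := by
    apply monotone_nat_of_le_succ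
    intro n
    by_cases hcase : n % k + 1 < k
    · have hd : (n+1) / k = n / k := by
        conv_lhs => rw [hdm n]
        rw [add_assoc, Nat.mul_add_div hk0, Nat.div_eq_of_lt hcase, add_zero]
      have hm : (n+1) % k = n % k + 1 := by
        conv_lhs => rw [hdm n]
        rw [add_assoc, Nat.mul_add_mod, Nat.mod_eq_of_lt hcase]
      by_cases h : n % k = 0
      · simp only [hπ', if_pos h, hd, hm, if_neg (by omega : ¬ (n % k + 1 = 0))]
        exact (hmemS (n/k) (n%k+1) hcase.le).1.1
      · simp only [hπ', if_neg h, hd, hm, if_neg (by omega : ¬ (n % k + 1 = 0))]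
        exact hmono2 (n/k) (n%k) hcase.le
    · have hrk : n % k + 1 = k := by have := Nat.mod_lt n hk0; omega
      have hd : (n+1) / k = n / k + 1 := by
        conv_lhs => rw [hdm n, add_assoc, hrk, ← Nat.mul_succ]
        exact Nat.mul_div_cancel_left _ hk0
      have hm : (n+1) % k = 0 := by
        conv_lhs => rw [hdm n, add_assoc, hrk, ← Nat.mul_succ]
        exact Nat.mul_mod_right k _
      calc π' n ≤ π (n / k + 1) := (hIccmem n).2
      _ = π' (n+1) := by rw [hπ']; simp only [if_pos hm, hd]
  have hπ'0 : π' 0 = 0 := by simp [hπ', Nat.zero_mod, h0]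
  have hπ'1 : ∀ n ≥ N * k, π' n = 1 := by
    intro n hn
    have hq : N ≤ n / k := (Nat.le_div_iff_mul_le hk0).2 hn
    have h1 : π (n / k) = 1 := hN _ hq
    have h2 : π (n / k + 1) = 1 := hN _ (by omega)
    have := hIccmem n
    rw [h1, h2] at this
    exact le_antisymm this.2 this.1
  have hrange : Set.range π ⊆ Set.range π' := by
    rintro _ ⟨q, rfl⟩
    refine ⟨q * k, ?_⟩
    simp [hπ', Nat.mul_mod_left, Nat.mul_div_cancel _ hk0]
  -- increments
  have hinc : ∀ n, x (π' (n+1)) - x (π' n) = (x (π (n/k+1)) - x (π (n/k))) / k := by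
    intro n
    rw [hval (n+1), hval n]
    by_cases hcase : n % k + 1 < k
    · have hd : (n+1) / k = n / k := by
        conv_lhs => rw [hdm n]
        rw [add_assoc, Nat.mul_add_div hk0, Nat.div_eq_of_lt hcase, add_zero]
      have hm : (n+1) % k = n % k + 1 := by
        conv_lhs => rw [hdm n]
        rw [add_assoc, Nat.mul_add_mod, Nat.mod_eq_of_lt hcase]
      rw [hd, hm]
      simp only [hL]
      push_cast
      field_simp
      ring
    · have hrk : n % k + 1 = k := by have := Nat.mod_lt n hk0; omega
      have hd : (n+1) / k = n / k + 1 := by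
        conv_lhs => rw [hdm n, add_assoc, hrk, ← Nat.mul_succ]
        exact Nat.mul_div_cancel_left _ hk0
      have hm : (n+1) % k = 0 := by
        conv_lhs => rw [hdm n, add_assoc, hrk, ← Nat.mul_succ]
        exact Nat.mul_mod_right k _
      rw [hd, hm]
      have hr : ((n % k : ℕ) : ℝ) = (k : ℝ) - 1 := by
        have := congrArg (Nat.cast (R := ℝ)) hrk; push_cast at this; linarith
      simp only [hL, hr]
      push_cast
      field_simp
      ring
  refine ⟨π', ⟨hπ'0, hmono', N * k, hπ'1⟩, hrange, ?_⟩
  have hq1 : qvFull x π' = ∑ n ∈ Finset.range (N * k),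
      ((x (π (n/k+1)) - x (π (n/k))) / k)^2 := by
    rw [qvFull, tsum_eq_sum (s := Finset.range (N * k))]
    · exact Finset.sum_congr rfl fun n _ => by rw [hinc n]
    · intro n hn
      have hn' : N * k ≤ n := le_of_not_gt fun h => hn (Finset.mem_range.mpr h)
      have hq : N ≤ n / k := (Nat.le_div_iff_mul_le hk0).2 hn'
      rw [hinc n, hN _ hq, hN _ (by omega)]
      simp
  have hq2 : qvFull x π = ∑ q ∈ Finset.range N, (x (π (q+1)) - x (π q))^2 := by
    rw [qvFull, tsum_eq_sum (s := Finset.range N)]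
    intro q hq
    have hq' : N ≤ q := le_of_not_gt fun h => hq (Finset.mem_range.mpr h)
    rw [hN _ hq', hN _ (by omega)]
    simp
  rw [hq1, hq2, sum_div_blocks (fun q => ((x (π (q+1)) - x (π q))/(k:ℝ))^2) k hk0 N]
  have hne : (k:ℝ) ≠ 0 := ne_of_gt hkR
  rw [show (∑ q ∈ Finset.range N, ((x (π (q+1)) - x (π q))/(k:ℝ))^2)
      = (∑ q ∈ Finset.range N, (x (π (q+1)) - x (π q))^2) / (k:ℝ)^2 by
    rw [Finset.sum_div]; exact Finset.sum_congr rfl fun q _ => div_pow _ _ _]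
  field_simp
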